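/- For every family of languages K(φ,U) = { (b a^{φ(k)})^k : k ∈ U }, where φ : ℕ⁺ → ℕ⁺ satisfies φ(n) → ∞ and U ⊆ ℕ is infinite, the language K(φ,U) is not indexed. More precisely: assuming the Shrinking Lemma for indexed languages, K(φ,U) fails its conclusion for m = 1. -/

import Mathlib

/-- The two-letter alphabet `{a, b}`. -/
inductive AB : Type
  | a : AB
  | b : AB
deriving DecidableEq

/-- The language `K(φ, U) = { (b a^{φ(k)})^k : k ∈ U }`. -/
def Klang (φ : ℕ → ℕ) (U : Set ℕ) : Set (List AB) :=
  { w | ∃ k ∈ U, w = (List.replicate k (AB.b :: List.replicate (φ k) AB.a)).flatten }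

/-- The conclusion of the Shrinking Lemma for indexed languages, for `m = 1`:
there is `k > 0` such that every `w ∈ L` with `|w| ≥ k` factors as a product of
`r` nonempty factors with `1 < r ≤ k`, such that each factor is contained in a
proper subproduct (obtained by deleting some of the factors, keeping their
order) which again lies in `L`. -/
def ShrinkOne (L : Set (List AB)) : Prop :=
  ∃ k : ℕ, 0 < k ∧ ∀ w ∈ L, k ≤ w.length →
    ∃ ws : List (List AB),
      w = ws.flatten ∧ 1 < ws.length ∧ ws.length ≤ k ∧
      (∀ wi ∈ ws, wi ≠ []) ∧
      ∀ i < ws.length, ∃ S : Finset ℕ,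
        i ∈ S ∧ S ⊆ Finset.range ws.length ∧ S ≠ Finset.range ws.length ∧
        (((List.range ws.length).filter (fun j => decide (j ∈ S))).map
          (fun j => ws.getD j [])).flatten ∈ L

namespace ABaux

def blocks (p n : ℕ) : List AB :=
  (List.replicate n (AB.b :: List.replicate p AB.a)).flatten

def fB (p : ℕ) : ℕ → AB := fun j => if j % (p+1) = 0 then AB.b else AB.a

lemma blocks_succ (p n : ℕ) :
    blocks p (n+1) = (AB.b :: List.replicate p AB.a) ++ blocks p n := by
  simp [blocks, List.replicate_succ]

lemma map_fB_range (p : ℕ) :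
    (List.range (p+1)).map (fB p) = AB.b :: List.replicate p AB.a := by
  rw [List.range_succ_eq_map, List.map_cons, List.map_map]
  congr 1
  rw [List.eq_replicate_iff]
  constructor
  · simp
  · intro x hx
    obtain ⟨j, hj, rfl⟩ := List.mem_map.mp hx
    rw [List.mem_range] at hj
    simp only [Function.comp, fB, Nat.succ_eq_add_one]
    rw [Nat.mod_eq_of_lt (by omega)]
    simp [Nat.add_one_ne_zero]

lemma blocks_map (p n : ℕ) : blocks p n = (List.range (n*(p+1))).map (fB p) := by
  induction n with
  | zero => simp [blocks]
  | succ n ih =>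
    rw [blocks_succ, ih]
    have h : (n+1)*(p+1) = (p+1) + n*(p+1) := by ring
    rw [h, List.range_add, List.map_append, List.map_map, map_fB_range]
    congr 1
    apply List.map_congr_left
    intro x _
    simp [fB, Nat.add_mod_left]

lemma length_blocks (p n : ℕ) : (blocks p n).length = n*(p+1) := by
  rw [blocks_map]; simp

lemma getElem_blocks (p n j : ℕ) (h : j < (blocks p n).length) :
    (blocks p n)[j] = fB p j := by
  have h' : j < n*(p+1) := by rwa [length_blocks] at h
  simp [blocks_map]

lemma count_b_blocks (p n : ℕ) : (blocks p n).count AB.b = n := by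
  induction n with
  | zero => simp [blocks]
  | succ n ih =>
    rw [blocks_succ, List.count_append, ih]
    simp [List.count_cons, List.count_replicate]
    omega



def gV (L : ℕ) : ℕ → AB := fun i => if i = 0 ∨ i = L+1 then AB.b else AB.a

lemma bab_eq_map (L : ℕ) :
    [AB.b] ++ List.replicate L AB.a ++ [AB.b] = (List.range (L+2)).map (gV L) := by
  have h2 : L + 2 = (L+1) + 1 := rfl
  rw [h2, List.range_succ, List.map_append]
  congr 1
  · rw [List.range_succ_eq_map, List.map_cons, List.map_map, List.singleton_append]
    congr 1
    symm
    rw [List.eq_replicate_iff]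
    constructor
    · simp
    · intro x hx
      obtain ⟨j, hj, rfl⟩ := List.mem_map.mp hx
      rw [List.mem_range] at hj
      simp only [Function.comp, gV, Nat.succ_eq_add_one]
      rw [if_neg (by omega)]
  · simp [gV]

lemma infix_bab {p L n : ℕ} (hp : 0 < p)
    (h : ([AB.b] ++ List.replicate L AB.a ++ [AB.b]) <:+: blocks p n) : L = p := by
  obtain ⟨s, t, hst⟩ := h
  rw [bab_eq_map] at hst
  have hlen : s.length + (L + 2) + t.length = n * (p+1) := by
    have := congrArg List.length hst
    simp [length_blocks] at this
    omega
  rw [List.append_assoc] at hst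
  have hfetch : ∀ i, i < L + 2 → fB p (s.length + i) = gV L i := by
    intro i hi
    have hlt : s.length + i < (blocks p n).length := by
      rw [length_blocks]; omega
    have heq := List.getElem_of_eq hst.symm hlt
    have hlt2 : s.length + i <
        (s ++ (List.map (gV L) (List.range (L + 2)) ++ t)).length := by
      rw [hst]; exact hlt
    have h2' : (s ++ (List.map (gV L) (List.range (L + 2)) ++ t))[s.length + i]'hlt2
        = gV L i := by
      rw [List.getElem_append_right (Nat.le_add_right _ _)]
      have hidx : s.length + i - s.length = i := by omega
      simp only [hidx]
      rw [List.getElem_append_left (by simpa using hi)]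
      simp
    rw [← getElem_blocks p n _ hlt]
    exact heq.trans h2' 
  have h0 : fB p s.length = AB.b := by
    have := hfetch 0 (by omega)
    simpa [gV] using this
  have hL1 : fB p (s.length + (L+1)) = AB.b := by
    have := hfetch (L+1) (by omega)
    simpa [gV] using this
  have hmid : ∀ i, 1 ≤ i → i ≤ L → fB p (s.length + i) = AB.a := by
    intro i h1 h2
    have := hfetch i (by omega)
    rw [this, gV, if_neg (by omega)]
  have hd0 : (p+1) ∣ s.length := by
    by_contra hcon
    rw [Nat.dvd_iff_mod_eq_zero] at hcon
    simp [fB, hcon] at h0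
  have hd1 : (p+1) ∣ s.length + (L+1) := by
    by_contra hcon
    rw [Nat.dvd_iff_mod_eq_zero] at hcon
    simp [fB, hcon] at hL1
  have hdL : (p+1) ∣ (L+1) := (Nat.dvd_add_right hd0).mp hd1
  obtain ⟨e, he⟩ := hdL
  have he0 : e ≠ 0 := by rintro rfl; omega
  rcases Nat.lt_or_ge e 2 with h2 | h2
  · have : e = 1 := by omega
    subst this
    omega
  · exfalso
    obtain ⟨c, hc⟩ := hd0
    have hple : p + 1 ≤ L := by nlinarith
    have hmb := hmid (p+1) (by omega) hple
    have hmod : (s.length + (p+1)) % (p+1) = 0 := by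
      have : s.length + (p+1) = (p+1) * (c+1) := by rw [hc]; ring
      rw [this]
      exact Nat.mul_mod_right _ _
    simp [fB, hmod] at hmb

lemma mem_split_first {l : List AB} (h : AB.b ∈ l) :
    ∃ s t, l = s ++ AB.b :: t ∧ AB.b ∉ s := by
  induction l with
  | nil => cases h
  | cons c l ih =>
    by_cases hc : c = AB.b
    · exact ⟨[], l, by rw [hc]; rfl, by simp⟩
    · have hbl : AB.b ∈ l := by
        rcases List.mem_cons.mp h with h' | h'
        · exact absurd h'.symm hc
        · exact h'
      obtain ⟨s, t, hst, hs⟩ := ih hbl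
      refine ⟨c :: s, t, by rw [hst]; rfl, ?_⟩
      simp only [List.mem_cons, not_or]
      exact ⟨fun h' => hc h'.symm, hs⟩

lemma split2 {u : List AB} (h : 2 ≤ u.count AB.b) :
    ∃ x y z, u = x ++ AB.b :: (y ++ AB.b :: z) ∧ AB.b ∉ y := by
  induction u with
  | nil => simp at h
  | cons c u ih =>
    by_cases hc : c = AB.b
    · subst hc
      have h1 : 1 ≤ u.count AB.b := by
        rw [List.count_cons_self] at h; omega
      have hb : AB.b ∈ u := List.count_pos_iff.mp (by omega)
      obtain ⟨y, z, hyz, hy⟩ := mem_split_first hb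
      exact ⟨[], y, z, by rw [hyz]; rfl, hy⟩
    · rw [List.count_cons_of_ne hc] at h
      obtain ⟨x, y, z, hxyz, hy⟩ := ih h
      exact ⟨c :: x, y, z, by rw [hxyz]; rfl, hy⟩

lemma key {p q n m : ℕ} {u : List AB} (hp : 0 < p) (hq : 0 < q)
    (h1 : u <:+: blocks p n) (h2 : u <:+: blocks q m)
    (hc : 2 ≤ u.count AB.b) : p = q := by
  obtain ⟨x, y, z, rfl, hy⟩ := split2 hc
  have hya : y = List.replicate y.length AB.a := by
    rw [List.eq_replicate_length]
    intro c hcy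
    cases c
    · rfl
    · exact absurd hcy hy
  have hinf : ([AB.b] ++ List.replicate y.length AB.a ++ [AB.b]) <:+:
      x ++ AB.b :: (y ++ AB.b :: z) := by
    refine ⟨x, z, ?_⟩
    rw [← hya]
    simp
  have e1 := infix_bab hp (hinf.trans h1)
  have e2 := infix_bab hq (hinf.trans h2)
  omega

lemma sum_map_filter_le (l : List ℕ) (f : ℕ → ℕ) (P : ℕ → Bool) :
    ((l.filter P).map f).sum ≤ (l.map f).sum := by
  induction l with
  | nil => simp
  | cons c l ih =>
    by_cases hc : P c
    · simp only [List.filter_cons, hc, if_pos, List.map_cons, List.sum_cons]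
      omega
    · have hc' : P c = false := by simpa using hc
      simp only [List.filter_cons, hc', Bool.false_eq_true, if_false, List.map_cons,
        List.sum_cons]
      omega

lemma sum_map_filter_lt (l : List ℕ) (f : ℕ → ℕ) (P : ℕ → Bool) (j : ℕ)
    (hj : j ∈ l) (hPj : P j = false) (hfj : 0 < f j) :
    ((l.filter P).map f).sum < (l.map f).sum := by
  induction l with
  | nil => cases hj
  | cons c l ih =>
    rcases List.mem_cons.mp hj with rfl | hj'
    · rw [List.filter_cons, hPj]
      simp only [Bool.false_eq_true, if_false, List.map_cons, List.sum_cons]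
      have := sum_map_filter_le l f P
      omega
    · by_cases hc : P c
      · simp only [List.filter_cons, hc, if_pos, List.map_cons, List.sum_cons]
        have := ih hj'
        omega
      · have hc' : P c = false := by simpa using hc
        simp only [List.filter_cons, hc', Bool.false_eq_true, if_false, List.map_cons,
          List.sum_cons]
        have := ih hj'
        omega

lemma map_getD_range (ws : List (List AB)) :
    (List.range ws.length).map (fun j => ws.getD j []) = ws := by
  apply List.ext_getElem (by simp)
  intro i h1 h2
  simp only [List.getElem_map, List.getElem_range]
  exact List.getD_eq_getElem _ _ h2

end ABaux

/-- for every `φ : ℕ⁺ → ℕ⁺` tending to infinity and every infinite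
`U ⊆ ℕ`, the language `K(φ,U)` fails the conclusion of the Shrinking Lemma for
`m = 1`; hence (by the Shrinking Lemma) `K(φ,U)` is not indexed. -/


theorem stmt_12 (φ : ℕ → ℕ) (hpos : ∀ n, 0 < φ n)
    (hφ : Filter.Tendsto φ Filter.atTop Filter.atTop)
    (U : Set ℕ) (hU : U.Infinite) :
    ¬ ShrinkOne (Klang φ U) := by
  rintro ⟨k, hk0, H⟩
  classical
  set c := (Finset.range (k+1)).sup φ with hc
  obtain ⟨N, hN⟩ := Filter.eventually_atTop.mp (hφ.eventually_ge_atTop (c+1))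
  obtain ⟨n₁, hn₁U, hn₁N⟩ := hU.exists_gt N
  have hex : ∃ m, m ∈ U ∧ φ m = φ n₁ := ⟨n₁, hn₁U, rfl⟩
  set n := Nat.find hex with hn
  obtain ⟨hnU, hφn⟩ := Nat.find_spec hex
  have hmin : ∀ m, m < n → ¬(m ∈ U ∧ φ m = φ n₁) := fun m hm => Nat.find_min hex hm
  have hφbig : c + 1 ≤ φ n := by rw [hφn]; exact hN n₁ (le_of_lt hn₁N)
  have hkn : k < n := by
    by_contra hkn
    push_neg at hkn
    have : φ n ≤ c := Finset.le_sup (Finset.mem_range.mpr (by omega))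
    omega
  set p := φ n with hp
  have hwmem : ABaux.blocks p n ∈ Klang φ U := ⟨n, hnU, rfl⟩
  have hwlen : k ≤ (ABaux.blocks p n).length := by
    rw [ABaux.length_blocks]
    calc k ≤ n := le_of_lt hkn
    _ = n * 1 := (Nat.mul_one n).symm
    _ ≤ n * (p+1) := Nat.mul_le_mul_left n (by omega)
  obtain ⟨ws, hflat, hr1, hrk, hne, hS⟩ := H _ hwmem hwlen
  have hcount : (ws.map (List.count AB.b)).sum = n := by
    rw [← List.count_flatten, ← hflat, ABaux.count_b_blocks]
  have hpig : ∃ wi ∈ ws, 2 ≤ wi.count AB.b := by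
    by_contra hcon
    push_neg at hcon
    have hle : (ws.map (List.count AB.b)).sum ≤ (ws.map (List.count AB.b)).length • 1 := by
      apply List.sum_le_card_nsmul
      intro x hx
      obtain ⟨wi, hwi, rfl⟩ := List.mem_map.mp hx
      have := hcon wi hwi
      omega
    simp only [List.length_map, smul_eq_mul, mul_one] at hle
    omega
  obtain ⟨wi, hwi, hwic⟩ := hpig
  obtain ⟨i, hilt, hieq⟩ := List.mem_iff_getElem.mp hwi
  obtain ⟨S, hiS, hSsub, hSne, hmem⟩ := hS i hilt
  obtain ⟨m, hmU, hw'⟩ := hmem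
  have hgetD : ws.getD i [] = wi := by rw [List.getD_eq_getElem _ _ hilt, hieq]
  have hu1 : wi <:+: ABaux.blocks p n := by
    rw [show ABaux.blocks p n = ws.flatten from hflat]
    exact List.infix_of_mem_flatten hwi
  have hufl : wi ∈ (((List.range ws.length).filter (fun j => decide (j ∈ S))).map
      (fun j => ws.getD j [])) := by
    rw [← hgetD]
    apply List.mem_map_of_mem
    apply List.mem_filter.mpr
    exact ⟨List.mem_range.mpr hilt, by simpa using hiS⟩
  have hu2 : wi <:+: ABaux.blocks (φ m) m := by
    have h := List.infix_of_mem_flatten hufl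
    rw [hw'] at h
    exact h
  have hpm : p = φ m := ABaux.key (hpos n) (hpos m) hu1 hu2 hwic
  have hssub : S ⊂ Finset.range ws.length := lt_of_le_of_ne hSsub hSne
  obtain ⟨j₀, hj₀r, hj₀S⟩ := Finset.exists_of_ssubset hssub
  rw [Finset.mem_range] at hj₀r
  have e1 : (ABaux.blocks p n).length =
      ((List.range ws.length).map (fun j => (ws.getD j []).length)).sum := by
    rw [hflat, List.length_flatten]
    conv_lhs => rw [← ABaux.map_getD_range ws]
    rw [List.map_map]
    rfl
  have e2 : (ABaux.blocks (φ m) m).length =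
      (((List.range ws.length).filter (fun j => decide (j ∈ S))).map
        (fun j => (ws.getD j []).length)).sum := by
    rw [show ABaux.blocks (φ m) m
        = (List.replicate m (AB.b :: List.replicate (φ m) AB.a)).flatten from rfl,
      ← hw', List.length_flatten, List.map_map]
    rfl
  have hlenlt : (ABaux.blocks (φ m) m).length < (ABaux.blocks p n).length := by
    rw [e1, e2]
    apply ABaux.sum_map_filter_lt _ _ _ j₀ (List.mem_range.mpr hj₀r) (by simp [hj₀S])
    have hmem' : ws.getD j₀ [] ∈ ws := by
      rw [List.getD_eq_getElem _ _ hj₀r]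
      exact List.getElem_mem _
    exact List.length_pos_iff.mpr (hne _ hmem')
  rw [ABaux.length_blocks, ABaux.length_blocks, ← hpm] at hlenlt
  have hmn : m < n := Nat.lt_of_mul_lt_mul_right hlenlt
  exact hmin m hmn ⟨hmU, by rw [← hpm, hp]; exact hφn⟩
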